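/- Let k ≥ 1 and let t₁, t₂, …, t_k be positive integers. Then there exists a family (x_J) of positive integers indexed by the nonempty subsets J of {1,…,k} such that: (i) for every i ∈ {1,…,k}, t_i = ∏_{J : i ∈ J} x_J, and (ii) for all nonempty subsets J, K with J ⊄ K and K ⊄ J, gcd(x_J, x_K) = 1. -/
import Mathlib


theorem stmt_12 (k : ℕ) (hk : 1 ≤ k) (t : Fin k → ℕ) (ht : ∀ i, 0 < t i) :
    ∃ x : Finset (Fin k) → ℕ,
      (∀ J : Finset (Fin k), J.Nonempty → 0 < x J) ∧
      (∀ i : Fin k, t i = ∏ J ∈ Finset.univ.filter (fun J : Finset (Fin k) => i ∈ J), x J) ∧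
      (∀ J K : Finset (Fin k), J.Nonempty → K.Nonempty → ¬ J ⊆ K → ¬ K ⊆ J →
        Nat.gcd (x J) (x K) = 1) := by
  classical
  set T : ℕ := (Finset.univ.sup t) + 1 with hT
  have htT : ∀ i, t i < T := fun i => Nat.lt_succ_of_le (Finset.le_sup (Finset.mem_univ i))
  set S : ℕ → ℕ → Finset (Fin k) :=
    fun p v => Finset.univ.filter (fun i => p ^ v ∣ t i) with hS
  refine ⟨fun J => ∏ p ∈ Finset.range T, ∏ v ∈ Finset.Icc 1 T,
      if p.Prime ∧ S p v = J then p else 1, ?_, ?_, ?_⟩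
  · intro J _
    apply Finset.prod_pos
    intro p _
    apply Finset.prod_pos
    intro v _
    split_ifs with h
    · exact h.1.pos
    · exact one_pos
  · intro i
    rw [Finset.prod_comm]
    have step1 : ∀ p ∈ Finset.range T,
        (∏ J ∈ Finset.univ.filter (fun J : Finset (Fin k) => i ∈ J),
          ∏ v ∈ Finset.Icc 1 T, if p.Prime ∧ S p v = J then p else 1)
        = ∏ v ∈ Finset.Icc 1 T, if p.Prime ∧ p ^ v ∣ t i then p else 1 := by
      intro p _
      rw [Finset.prod_comm]
      refine Finset.prod_congr rfl ?_
      intro v _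
      by_cases hd : p.Prime ∧ p ^ v ∣ t i
      · rw [if_pos hd]
        have hmem : S p v ∈ Finset.univ.filter (fun J : Finset (Fin k) => i ∈ J) := by
          simp [hS, hd.2]
        rw [Finset.prod_eq_single_of_mem (S p v) hmem]
        · rw [if_pos ⟨hd.1, rfl⟩]
        · intro J _ hJ
          rw [if_neg]
          rintro ⟨-, h⟩
          exact hJ h.symm
      · rw [if_neg hd]
        apply Finset.prod_eq_one
        intro J hJ
        rw [if_neg]
        rintro ⟨hp, rfl⟩
        refine hd ⟨hp, ?_⟩
        simp only [Finset.mem_filter, Finset.mem_univ, true_and] at hJ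
        simpa [hS] using hJ
    rw [Finset.prod_congr rfl step1]
    have step2 : ∀ p ∈ Finset.range T,
        (∏ v ∈ Finset.Icc 1 T, if p.Prime ∧ p ^ v ∣ t i then p else 1)
        = if p.Prime then p ^ ((t i).factorization p) else 1 := by
      intro p _
      by_cases hp : p.Prime
      · rw [if_pos hp]
        have hcond : ∀ v, (p.Prime ∧ p ^ v ∣ t i) ↔ v ≤ (t i).factorization p := by
          intro v
          rw [hp.pow_dvd_iff_le_factorization (ht i).ne']
          simp [hp]
        have : (∏ v ∈ Finset.Icc 1 T, if p.Prime ∧ p ^ v ∣ t i then p else 1)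
            = ∏ v ∈ Finset.Icc 1 T, if v ≤ (t i).factorization p then p else 1 := by
          refine Finset.prod_congr rfl fun v _ => ?_
          exact if_congr (hcond v) rfl rfl
        rw [this, Finset.prod_ite, Finset.prod_const, Finset.prod_const_one, mul_one]
        congr 1
        have hfil : (Finset.Icc 1 T).filter (fun v => v ≤ (t i).factorization p)
            = Finset.Icc 1 ((t i).factorization p) := by
          have hle : (t i).factorization p ≤ T := by
            have h1 : (t i).factorization p < t i := Nat.factorization_lt p (ht i).ne'
            have h2 := htT i
            omega
          ext v
          simp only [Finset.mem_filter, Finset.mem_Icc]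
          constructor
          · rintro ⟨⟨h1, _⟩, h2⟩; exact ⟨h1, h2⟩
          · rintro ⟨h1, h2⟩; exact ⟨⟨h1, le_trans h2 hle⟩, h2⟩
        rw [hfil, Nat.card_Icc]
        simp
      · rw [if_neg hp]
        apply Finset.prod_eq_one
        intro v _
        rw [if_neg (fun h => hp h.1)]
    rw [Finset.prod_congr rfl step2, Finset.prod_ite, Finset.prod_const_one, mul_one]
    conv_lhs => rw [← Nat.prod_pow_prime_padicValNat (t i) (ht i).ne' T (htT i)]
    refine Finset.prod_congr rfl fun p hp => ?_
    simp only [Finset.mem_filter] at hp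
    rw [Nat.factorization_def _ hp.2]
  · intro J K hJ hK hJK hKJ
    by_contra hg
    set g := Nat.gcd (∏ p ∈ Finset.range T, ∏ v ∈ Finset.Icc 1 T,
      if p.Prime ∧ S p v = J then p else 1) (∏ p ∈ Finset.range T, ∏ v ∈ Finset.Icc 1 T,
      if p.Prime ∧ S p v = K then p else 1) with hgdef
    have hg1 : g ≠ 1 := hg
    have hgpos : 0 < g := Nat.gcd_pos_of_pos_left _ (by
      apply Finset.prod_pos; intro p _; apply Finset.prod_pos; intro v _
      split_ifs with h
      · exact h.1.pos
      · exact one_pos)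
    obtain ⟨q, hq, hqg⟩ : ∃ q, q.Prime ∧ q ∣ g :=
      ⟨g.minFac, Nat.minFac_prime hg1, Nat.minFac_dvd g⟩
    have extract : ∀ L : Finset (Fin k), q ∣ (∏ p ∈ Finset.range T, ∏ v ∈ Finset.Icc 1 T,
        if p.Prime ∧ S p v = L then p else 1) → ∃ v, L = S q v := by
      intro L hdvd
      rw [hq.prime.dvd_finset_prod_iff] at hdvd
      obtain ⟨p, -, hp⟩ := hdvd
      rw [hq.prime.dvd_finset_prod_iff] at hp
      obtain ⟨v, -, hv⟩ := hp
      by_cases hc : p.Prime ∧ S p v = L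
      · rw [if_pos hc] at hv
        have : q = p := ((Nat.prime_dvd_prime_iff_eq hq hc.1).1 hv)
        exact ⟨v, by rw [← hc.2, this]⟩
      · rw [if_neg hc] at hv
        exact absurd (Nat.dvd_one.mp hv) hq.ne_one
    obtain ⟨v, hv⟩ := extract J (hqg.trans (Nat.gcd_dvd_left _ _))
    obtain ⟨w, hw⟩ := extract K (hqg.trans (Nat.gcd_dvd_right _ _))
    have hmono : ∀ a b : ℕ, a ≤ b → S q b ⊆ S q a := by
      intro a b hab i hi
      simp only [hS, Finset.mem_filter, Finset.mem_univ, true_and] at hi ⊢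
      exact dvd_trans (pow_dvd_pow q hab) hi
    rcases le_total v w with h | h
    · exact hKJ (hv ▸ hw ▸ hmono v w h)
    · exact hJK (hw ▸ hv ▸ hmono w v h)
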